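/- arXiv:2010.06585 — 3 statements merged into one kernel-verified Lean document; each statement's English description precedes it below -/
import Mathlib

section
/- If (A,b,c) is a minimal (observable and controllable) realization of an NC polynomial, then the tuple A = (A_1, …, A_d) is jointly nilpotent: A^w = 0 for every word w of length greater than the degree of the polynomial. -/
open Matrix

/-- If `(A,b,c)` is an observable and controllable (minimal) realization and the
formal power series coefficients `b* A^w c` vanish for all words of length
greater than `m`, then the tuple `A` is jointly nilpotent:
`A^w = 0` for every word `w` with `|w| > m`. -/
theorem minimal_realization_of_polynomial_jointly_nilpotent
    {d N : ℕ} (A : Fin d → Matrix (Fin N) (Fin N) ℂ) (b c : Fin N → ℂ) (m : ℕ)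
    (hobs : Submodule.span ℂ
      {x : Fin N → ℂ | ∃ w : List (Fin d), x = ((w.map A).prod)ᴴ *ᵥ b} = ⊤)
    (hcon : Submodule.span ℂ
      {x : Fin N → ℂ | ∃ w : List (Fin d), x = (w.map A).prod *ᵥ c} = ⊤)
    (hcoef : ∀ w : List (Fin d), m < w.length →
      star b ⬝ᵥ ((w.map A).prod *ᵥ c) = 0) :
    ∀ w : List (Fin d), m < w.length → (w.map A).prod = 0 := by
  intro w hw
  set M := (w.map A).prod with hM
  -- key coefficient identity
  have key : ∀ u v : List (Fin d),
      star b ⬝ᵥ ((u.map A).prod *ᵥ (M *ᵥ ((v.map A).prod *ᵥ c))) = 0 := by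
    intro u v
    have h := hcoef (u ++ w ++ v) (by simp; omega)
    simpa [List.map_append, List.prod_append, Matrix.mulVec_mulVec, mul_assoc] using h
  -- extend to all y via controllability
  have step2 : ∀ u : List (Fin d), ∀ y : Fin N → ℂ,
      star b ⬝ᵥ ((u.map A).prod *ᵥ (M *ᵥ y)) = 0 := by
    intro u y
    have hy : y ∈ Submodule.span ℂ
        {x : Fin N → ℂ | ∃ w : List (Fin d), x = (w.map A).prod *ᵥ c} := by
      rw [hcon]; trivial
    induction hy using Submodule.span_induction with
    | mem x hx =>
      obtain ⟨v, rfl⟩ := hx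
      exact key u v
    | zero => simp
    | add x z hx hz ihx ihz =>
      rw [Matrix.mulVec_add, Matrix.mulVec_add, dotProduct_add, ihx, ihz, add_zero]
    | smul a x hx ihx =>
      rw [Matrix.mulVec_smul, Matrix.mulVec_smul, dotProduct_smul, ihx, smul_zero]
  -- extend to all x via observability
  have step3 : ∀ y x : Fin N → ℂ, star x ⬝ᵥ (M *ᵥ y) = 0 := by
    intro y x
    have hx : x ∈ Submodule.span ℂ
        {x : Fin N → ℂ | ∃ w : List (Fin d), x = ((w.map A).prod)ᴴ *ᵥ b} := by
      rw [hobs]; trivial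
    induction hx using Submodule.span_induction with
    | mem x hx =>
      obtain ⟨u, rfl⟩ := hx
      have : star (((u.map A).prod)ᴴ *ᵥ b) ⬝ᵥ (M *ᵥ y)
          = star b ⬝ᵥ ((u.map A).prod *ᵥ (M *ᵥ y)) := by
        simp only [Matrix.star_mulVec, Matrix.conjTranspose_conjTranspose,
          Matrix.dotProduct_mulVec, Matrix.vecMul_vecMul]
      rw [this]; exact step2 u y
    | zero => simp
    | add x z hx hz ihx ihz =>
      simp only [star_add, add_dotProduct] at *
      rw [ihx, ihz, add_zero]
    | smul a x hx ihx =>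
      simp only [star_smul, smul_dotProduct] at *
      rw [ihx, smul_zero]
  have hzero : ∀ y : Fin N → ℂ, M *ᵥ y = 0 := by
    intro y
    have h := step3 y (M *ᵥ y)
    set z := M *ᵥ y with hz
    have h' : (∑ j, (Complex.normSq (z j) : ℂ)) = 0 := by
      simpa [dotProduct, Pi.star_apply, Complex.star_def,
        Complex.normSq_eq_conj_mul_self] using h
    have h'' : (∑ j, Complex.normSq (z j)) = 0 := by
      exact_mod_cast h'
    funext i
    have := (Finset.sum_eq_zero_iff_of_nonneg
      (fun j _ => Complex.normSq_nonneg (z j))).mp h'' i (Finset.mem_univ i)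
    exact Complex.normSq_eq_zero.mp this
  ext i j
  have := congrFun (hzero (Pi.single j 1)) i
  simpa [Matrix.mulVec, dotProduct, Pi.single_apply] using this
end

section
/- Cauchy–Schwarz inequality for the joint (outer) spectral radius: for d-tuples of matrices X and Y, the spectral radius of ∑_j X_j ⊗ conj(Y_j) is at most spr(X)·spr(Y), where spr(X)² is the spectral radius of ∑_j conj(X_j) ⊗ X_j. -/
open Matrix Kronecker Finset Filter Topology
open scoped NNReal ENNReal

attribute [local instance] Matrix.linftyOpNormedAddCommGroup Matrix.linftyOpNormedRing
  Matrix.linftyOpNormedAlgebra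

section Aux

lemma sum_pow_expand {R : Type*} [Semiring R] {d : ℕ} (f : Fin d → R) :
    ∀ k : ℕ, (∑ j : Fin d, f j) ^ k
      = ∑ w : Fin k → Fin d, ((List.ofFn w).map f).prod
  | 0 => by simp
  | (k+1) => by
    rw [pow_succ', sum_pow_expand f k, Finset.sum_mul_sum]
    rw [← Fintype.sum_prod_type']
    refine Fintype.sum_equiv (Fin.consEquiv fun _ => Fin d) _ _ fun jw => ?_
    simp [Fin.consEquiv, List.ofFn_succ, Function.comp]

lemma kron_list_prod {d n m : ℕ} (f : Fin d → Matrix (Fin n) (Fin n) ℂ)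
    (g : Fin d → Matrix (Fin m) (Fin m) ℂ) :
    ∀ l : List (Fin d),
      (l.map fun j => f j ⊗ₖ g j).prod = (l.map f).prod ⊗ₖ (l.map g).prod
  | [] => by simp [Matrix.one_kronecker_one]
  | (j :: l) => by
    simp [kron_list_prod f g l, Matrix.mul_kronecker_mul]

lemma conj_list_prod {d m : ℕ} (Y : Fin d → Matrix (Fin m) (Fin m) ℂ) (l : List (Fin d)) :
    (l.map fun j => (Y j).map (starRingEnd ℂ)).prod
      = ((l.map Y).prod).map (starRingEnd ℂ) := by
  have := map_list_prod
    ((RingHom.mapMatrix (starRingEnd ℂ) : Matrix (Fin m) (Fin m) ℂ →+* _)) (l.map Y)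
  simp only [RingHom.mapMatrix_apply] at this
  rw [this, List.map_map]
  rfl

lemma conj_mul_self_eq (z : ℂ) :
    (starRingEnd ℂ) z * z = (((‖z‖₊ ^ 2 : ℝ≥0) : ℝ) : ℂ) := by
  rw [Complex.conj_mul']
  push_cast
  norm_cast

lemma entry_nnnorm_le {ι κ : Type*} [Fintype ι] [Fintype κ] (P : Matrix ι κ ℂ) (i : ι) (j : κ) :
    ‖P i j‖₊ ≤ ‖P‖₊ := by
  rw [Matrix.linfty_opNNNorm_def]
  calc ‖P i j‖₊ ≤ ∑ j', ‖P i j'‖₊ :=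
        Finset.single_le_sum (f := fun j' => ‖P i j'‖₊) (fun j' _ => zero_le)
          (Finset.mem_univ j)
    _ ≤ _ := Finset.le_sup (f := fun i => ∑ j', ‖P i j'‖₊) (Finset.mem_univ i)

lemma nnnorm_le_card_mul {ι κ : Type*} [Fintype ι] [Fintype κ] (P : Matrix ι κ ℂ) (c : ℝ≥0)
    (h : ∀ i j, ‖P i j‖₊ ≤ c) : ‖P‖₊ ≤ (Fintype.card κ) * c := by
  rw [Matrix.linfty_opNNNorm_def]
  refine Finset.sup_le fun i _ => ?_
  calc ∑ j, ‖P i j‖₊ ≤ ∑ _j : κ, c := Finset.sum_le_sum fun j _ => h i j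
    _ = (Fintype.card κ) * c := by simp [mul_comm]

/-- The key entrywise Cauchy–Schwarz bound for powers. -/
lemma key_entry_bound {d n m : ℕ} (X : Fin d → Matrix (Fin n) (Fin n) ℂ)
    (Y : Fin d → Matrix (Fin m) (Fin m) ℂ) (k : ℕ) (a b : Fin n) (c e : Fin m) :
    ‖((∑ j : Fin d, X j ⊗ₖ (Y j).map (starRingEnd ℂ)) ^ k) (a, c) (b, e)‖₊ ≤
      NNReal.sqrt ‖(∑ j : Fin d, (X j).map (starRingEnd ℂ) ⊗ₖ X j) ^ k‖₊ *
        NNReal.sqrt ‖(∑ j : Fin d, (Y j).map (starRingEnd ℂ) ⊗ₖ Y j) ^ k‖₊ := by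
  set P : (Fin k → Fin d) → Matrix (Fin n) (Fin n) ℂ :=
    fun w => ((List.ofFn w).map X).prod with hP
  set Q : (Fin k → Fin d) → Matrix (Fin m) (Fin m) ℂ :=
    fun w => ((List.ofFn w).map Y).prod with hQ
  have hM : ((∑ j : Fin d, X j ⊗ₖ (Y j).map (starRingEnd ℂ)) ^ k) (a, c) (b, e)
      = ∑ w : Fin k → Fin d, P w a b * (starRingEnd ℂ) (Q w c e) := by
    rw [sum_pow_expand, Matrix.sum_apply]
    refine Finset.sum_congr rfl fun w _ => ?_
    have : ((List.ofFn w).map fun j => X j ⊗ₖ (Y j).map (starRingEnd ℂ)).prod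
        = P w ⊗ₖ (Q w).map (starRingEnd ℂ) := by
      rw [kron_list_prod, conj_list_prod]
    rw [this]
    simp [Matrix.kroneckerMap_apply]
  have hA : ((∑ j : Fin d, (X j).map (starRingEnd ℂ) ⊗ₖ X j) ^ k) (a, a) (b, b)
      = (((∑ w : Fin k → Fin d, ‖P w a b‖₊ ^ 2 : ℝ≥0) : ℝ) : ℂ) := by
    rw [sum_pow_expand, Matrix.sum_apply]
    have hterm : ∀ w : Fin k → Fin d,
        (((List.ofFn w).map fun j => (X j).map (starRingEnd ℂ) ⊗ₖ X j).prod) (a, a) (b, b)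
          = (((‖P w a b‖₊ ^ 2 : ℝ≥0) : ℝ) : ℂ) := by
      intro w
      have : ((List.ofFn w).map fun j => (X j).map (starRingEnd ℂ) ⊗ₖ X j).prod
          = (P w).map (starRingEnd ℂ) ⊗ₖ P w := by
        rw [kron_list_prod, conj_list_prod]
      rw [this]
      simp only [Matrix.kroneckerMap_apply, Matrix.map_apply]
      exact conj_mul_self_eq _
    rw [Finset.sum_congr rfl fun w _ => hterm w]
    norm_cast
  have hB : ((∑ j : Fin d, (Y j).map (starRingEnd ℂ) ⊗ₖ Y j) ^ k) (c, c) (e, e)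
      = (((∑ w : Fin k → Fin d, ‖Q w c e‖₊ ^ 2 : ℝ≥0) : ℝ) : ℂ) := by
    rw [sum_pow_expand, Matrix.sum_apply]
    have hterm : ∀ w : Fin k → Fin d,
        (((List.ofFn w).map fun j => (Y j).map (starRingEnd ℂ) ⊗ₖ Y j).prod) (c, c) (e, e)
          = (((‖Q w c e‖₊ ^ 2 : ℝ≥0) : ℝ) : ℂ) := by
      intro w
      have : ((List.ofFn w).map fun j => (Y j).map (starRingEnd ℂ) ⊗ₖ Y j).prod
          = (Q w).map (starRingEnd ℂ) ⊗ₖ Q w := by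
        rw [kron_list_prod, conj_list_prod]
      rw [this]
      simp only [Matrix.kroneckerMap_apply, Matrix.map_apply]
      exact conj_mul_self_eq _
    rw [Finset.sum_congr rfl fun w _ => hterm w]
    norm_cast
  have hAnn : (∑ w : Fin k → Fin d, ‖P w a b‖₊ ^ 2)
      = ‖((∑ j : Fin d, (X j).map (starRingEnd ℂ) ⊗ₖ X j) ^ k) (a, a) (b, b)‖₊ := by
    rw [hA]
    have h : ∀ r : ℝ≥0, ‖((r : ℝ) : ℂ)‖₊ = r := fun r => by simp [Complex.nnnorm_real]
    rw [h]
  have hBnn : (∑ w : Fin k → Fin d, ‖Q w c e‖₊ ^ 2)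
      = ‖((∑ j : Fin d, (Y j).map (starRingEnd ℂ) ⊗ₖ Y j) ^ k) (c, c) (e, e)‖₊ := by
    rw [hB]
    have h : ∀ r : ℝ≥0, ‖((r : ℝ) : ℂ)‖₊ = r := fun r => by simp [Complex.nnnorm_real]
    rw [h]
  calc ‖((∑ j : Fin d, X j ⊗ₖ (Y j).map (starRingEnd ℂ)) ^ k) (a, c) (b, e)‖₊
      = ‖∑ w : Fin k → Fin d, P w a b * (starRingEnd ℂ) (Q w c e)‖₊ := by rw [hM]
    _ ≤ ∑ w : Fin k → Fin d, ‖P w a b‖₊ * ‖Q w c e‖₊ := by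
        refine (nnnorm_sum_le _ _).trans (Finset.sum_le_sum fun w _ => ?_)
        rw [nnnorm_mul, RCLike.nnnorm_conj]
    _ ≤ NNReal.sqrt (∑ w : Fin k → Fin d, ‖P w a b‖₊ ^ 2) *
          NNReal.sqrt (∑ w : Fin k → Fin d, ‖Q w c e‖₊ ^ 2) :=
        NNReal.sum_mul_le_sqrt_mul_sqrt _ _ _
    _ ≤ _ := by
        rw [hAnn, hBnn]
        exact mul_le_mul' (NNReal.sqrt_le_sqrt.mpr (entry_nnnorm_le _ _ _))
          (NNReal.sqrt_le_sqrt.mpr (entry_nnnorm_le _ _ _))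

lemma spectralRadius_of_subsingleton {A' : Type*} [Ring A'] [Algebra ℂ A'] [Subsingleton A']
    (a : A') : spectralRadius ℂ a = 0 := by
  have h : spectrum ℂ a = ∅ := by
    ext z
    simp [spectrum.mem_iff, isUnit_of_subsingleton]
  rw [spectralRadius, h]
  simp

end Aux

/-- Cauchy–Schwarz inequality for the joint (outer) spectral radius:
`ρ(∑_j X_j ⊗ conj(Y_j)) ≤ spr(X) · spr(Y)`, where
`spr(X) = sqrt(ρ(∑_j conj(X_j) ⊗ X_j))`. -/
theorem spectralRadius_kronecker_cauchy_schwarz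
    {d n m : ℕ} (X : Fin d → Matrix (Fin n) (Fin n) ℂ)
    (Y : Fin d → Matrix (Fin m) (Fin m) ℂ) :
    spectralRadius ℂ (∑ j : Fin d, X j ⊗ₖ (Y j).map (starRingEnd ℂ)) ≤
      (spectralRadius ℂ
          (∑ j : Fin d, (X j).map (starRingEnd ℂ) ⊗ₖ X j)) ^ ((1 : ℝ) / 2) *
        (spectralRadius ℂ
          (∑ j : Fin d, (Y j).map (starRingEnd ℂ) ⊗ₖ Y j)) ^ ((1 : ℝ) / 2) := by
  rcases Nat.eq_zero_or_pos n with hn | hn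
  · subst hn
    haveI : IsEmpty (Fin 0 × Fin m) := by infer_instance
    rw [spectralRadius_of_subsingleton]
    exact zero_le
  rcases Nat.eq_zero_or_pos m with hm | hm
  · subst hm
    haveI : IsEmpty (Fin n × Fin 0) := by infer_instance
    rw [spectralRadius_of_subsingleton]
    exact zero_le
  haveI : Nonempty (Fin n) := ⟨⟨0, hn⟩⟩
  haveI : Nonempty (Fin m) := ⟨⟨0, hm⟩⟩
  set M := ∑ j : Fin d, X j ⊗ₖ (Y j).map (starRingEnd ℂ) with hMdef
  set A := ∑ j : Fin d, (X j).map (starRingEnd ℂ) ⊗ₖ X j with hAdef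
  set B := ∑ j : Fin d, (Y j).map (starRingEnd ℂ) ⊗ₖ Y j with hBdef
  -- The norm bound for powers
  have hnorm : ∀ k : ℕ, ‖M ^ k‖₊ ≤ (n * m : ℝ≥0) *
      (NNReal.sqrt ‖A ^ k‖₊ * NNReal.sqrt ‖B ^ k‖₊) := by
    intro k
    have := nnnorm_le_card_mul (M ^ k)
      (NNReal.sqrt ‖A ^ k‖₊ * NNReal.sqrt ‖B ^ k‖₊)
      (fun i j => key_entry_bound X Y k i.1 j.1 i.2 j.2)
    simpa using this
  -- each spectral point is bounded
  have key : ∀ μ ∈ spectrum ℂ M, (‖μ‖₊ : ℝ≥0∞) ≤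
      (spectralRadius ℂ A) ^ ((1 : ℝ) / 2) * (spectralRadius ℂ B) ^ ((1 : ℝ) / 2) := by
    intro μ hμ
    have hpow : ∀ k : ℕ, ‖μ‖₊ ^ k ≤
        (n * m : ℝ≥0) * (NNReal.sqrt ‖A ^ k‖₊ * NNReal.sqrt ‖B ^ k‖₊) := by
      intro k
      have h1 : μ ^ k ∈ spectrum ℂ (M ^ k) :=
        spectrum.pow_image_subset M k ⟨μ, hμ, rfl⟩
      have h2 : ‖μ ^ k‖ ≤ ‖M ^ k‖ := spectrum.norm_le_norm_of_mem h1
      have h3 : ‖μ‖₊ ^ k ≤ ‖M ^ k‖₊ := by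
        rw [← nnnorm_pow]
        exact h2
      exact h3.trans (hnorm k)
    -- pass to `ℝ≥0∞` and take `k`-th roots
    have hineq : ∀ k : ℕ, 1 ≤ k → (‖μ‖₊ : ℝ≥0∞) ≤
        ((n * m : ℝ≥0) : ℝ≥0∞) ^ ((1 : ℝ) / k) *
          (((‖A ^ k‖₊ : ℝ≥0∞)) ^ ((1 : ℝ) / k)) ^ ((1 : ℝ) / 2) *
          (((‖B ^ k‖₊ : ℝ≥0∞)) ^ ((1 : ℝ) / k)) ^ ((1 : ℝ) / 2) := by
      intro k hk
      have hk0 : (k : ℝ) ≠ 0 := Nat.cast_ne_zero.mpr (by omega)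
      have hcoe : ((‖μ‖₊ ^ k : ℝ≥0) : ℝ≥0∞) ≤
          ((n * m : ℝ≥0) : ℝ≥0∞) * ((NNReal.sqrt ‖A ^ k‖₊ : ℝ≥0∞) *
            (NNReal.sqrt ‖B ^ k‖₊ : ℝ≥0∞)) := by
        rw [← ENNReal.coe_mul, ← ENNReal.coe_mul]
        exact_mod_cast hpow k
      have h4 := ENNReal.rpow_le_rpow hcoe (by positivity : (0:ℝ) ≤ 1 / k)
      have hL : (((‖μ‖₊ ^ k : ℝ≥0) : ℝ≥0∞)) ^ ((1 : ℝ) / k) = (‖μ‖₊ : ℝ≥0∞) := by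
        rw [ENNReal.coe_pow, ← ENNReal.rpow_natCast (‖μ‖₊ : ℝ≥0∞) k,
          ← ENNReal.rpow_mul, mul_one_div, div_self hk0, ENNReal.rpow_one]
      have hsqrtA : ((NNReal.sqrt ‖A ^ k‖₊ : ℝ≥0) : ℝ≥0∞) ^ ((1 : ℝ) / k)
          = (((‖A ^ k‖₊ : ℝ≥0∞)) ^ ((1 : ℝ) / k)) ^ ((1 : ℝ) / 2) := by
        rw [NNReal.sqrt_eq_rpow, ENNReal.coe_rpow_of_nonneg _ (by norm_num : (0:ℝ) ≤ 1/2),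
          ← ENNReal.rpow_mul, ← ENNReal.rpow_mul, mul_comm]
      have hsqrtB : ((NNReal.sqrt ‖B ^ k‖₊ : ℝ≥0) : ℝ≥0∞) ^ ((1 : ℝ) / k)
          = (((‖B ^ k‖₊ : ℝ≥0∞)) ^ ((1 : ℝ) / k)) ^ ((1 : ℝ) / 2) := by
        rw [NNReal.sqrt_eq_rpow, ENNReal.coe_rpow_of_nonneg _ (by norm_num : (0:ℝ) ≤ 1/2),
          ← ENNReal.rpow_mul, ← ENNReal.rpow_mul, mul_comm]
      calc (‖μ‖₊ : ℝ≥0∞)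
          = (((‖μ‖₊ ^ k : ℝ≥0) : ℝ≥0∞)) ^ ((1 : ℝ) / k) := hL.symm
        _ ≤ (((n * m : ℝ≥0) : ℝ≥0∞) * ((NNReal.sqrt ‖A ^ k‖₊ : ℝ≥0∞) *
              (NNReal.sqrt ‖B ^ k‖₊ : ℝ≥0∞))) ^ ((1 : ℝ) / k) := h4
        _ = _ := by
            rw [ENNReal.mul_rpow_of_nonneg _ _ (by positivity : (0:ℝ) ≤ 1 / k),
              ENNReal.mul_rpow_of_nonneg _ _ (by positivity : (0:ℝ) ≤ 1 / k),
              hsqrtA, hsqrtB, mul_assoc]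
    -- limits
    have tA : Tendsto (fun k : ℕ => (((‖A ^ k‖₊ : ℝ≥0∞)) ^ ((1 : ℝ) / k)) ^ ((1 : ℝ) / 2))
        atTop (𝓝 ((spectralRadius ℂ A) ^ ((1 : ℝ) / 2))) :=
      (spectrum.pow_nnnorm_pow_one_div_tendsto_nhds_spectralRadius A).ennrpow_const _
    have tB : Tendsto (fun k : ℕ => (((‖B ^ k‖₊ : ℝ≥0∞)) ^ ((1 : ℝ) / k)) ^ ((1 : ℝ) / 2))
        atTop (𝓝 ((spectralRadius ℂ B) ^ ((1 : ℝ) / 2))) :=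
      (spectrum.pow_nnnorm_pow_one_div_tendsto_nhds_spectralRadius B).ennrpow_const _
    have hC0 : (n * m : ℝ≥0) ≠ 0 := by positivity
    have tC : Tendsto (fun k : ℕ => ((n * m : ℝ≥0) : ℝ≥0∞) ^ ((1 : ℝ) / k))
        atTop (𝓝 1) := by
      have h0 : Tendsto (fun k : ℕ => (1 : ℝ) / k) atTop (𝓝 0) :=
        tendsto_one_div_atTop_nhds_zero_nat
      have hnn : Tendsto (fun k : ℕ => (n * m : ℝ≥0) ^ ((1 : ℝ) / k)) atTop
          (𝓝 ((n * m : ℝ≥0) ^ (0 : ℝ))) :=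
        Filter.Tendsto.nnrpow tendsto_const_nhds h0 (Or.inl hC0)
      rw [NNReal.rpow_zero] at hnn
      have := ENNReal.tendsto_coe.mpr hnn
      simpa [ENNReal.coe_rpow_of_ne_zero hC0] using this
    have hAtop : (spectralRadius ℂ A) ^ ((1 : ℝ) / 2) ≠ ⊤ := by
      refine ENNReal.rpow_ne_top_of_nonneg (by norm_num) ?_
      exact ne_top_of_le_ne_top ENNReal.coe_ne_top (spectrum.spectralRadius_le_nnnorm A)
    have hBtop : (spectralRadius ℂ B) ^ ((1 : ℝ) / 2) ≠ ⊤ := by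
      refine ENNReal.rpow_ne_top_of_nonneg (by norm_num) ?_
      exact ne_top_of_le_ne_top ENNReal.coe_ne_top (spectrum.spectralRadius_le_nnnorm B)
    have tprod : Tendsto (fun k : ℕ =>
        ((n * m : ℝ≥0) : ℝ≥0∞) ^ ((1 : ℝ) / k) *
          (((‖A ^ k‖₊ : ℝ≥0∞)) ^ ((1 : ℝ) / k)) ^ ((1 : ℝ) / 2) *
          (((‖B ^ k‖₊ : ℝ≥0∞)) ^ ((1 : ℝ) / k)) ^ ((1 : ℝ) / 2)) atTop
        (𝓝 (1 * (spectralRadius ℂ A) ^ ((1 : ℝ) / 2) *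
          (spectralRadius ℂ B) ^ ((1 : ℝ) / 2))) := by
      exact (ENNReal.Tendsto.mul (ENNReal.Tendsto.mul tC (Or.inr hAtop) tA
        (Or.inr ENNReal.one_ne_top)) (Or.inr hBtop) tB
        (Or.inr (ENNReal.mul_ne_top ENNReal.one_ne_top hAtop)))
    have := ge_of_tendsto tprod (eventually_atTop.mpr ⟨1, fun k hk => hineq k hk⟩)
    rwa [one_mul] at this
  -- conclude
  show (⨆ μ ∈ spectrum ℂ M, (‖μ‖₊ : ℝ≥0∞)) ≤ _
  exact iSup₂_le key
end

section
/- For an isometry V on a Hilbert space and z in the open unit disk, the Möbius transform (z·I − V)(I − conj(z)·V)^{-1} is an isometry. -/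
open ContinuousLinearMap

/-- For an isometry `V` on a complex Hilbert space and `z` in the open unit
disk, `I − conj(z)V` is invertible and the Möbius transform
`W = (zI − V)(I − conj(z)V)⁻¹` is an isometry. -/
theorem moebius_of_isometry_is_isometry
    {H : Type*} [NormedAddCommGroup H] [InnerProductSpace ℂ H] [CompleteSpace H]
    (V : H →L[ℂ] H) (hV : adjoint V ∘L V = 1) (z : ℂ) (hz : ‖z‖ < 1) :
    IsUnit (1 - (starRingEnd ℂ z) • V) ∧
      adjoint ((z • (1 : H →L[ℂ] H) - V) *
          Ring.inverse (1 - (starRingEnd ℂ z) • V)) *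
        ((z • (1 : H →L[ℂ] H) - V) *
          Ring.inverse (1 - (starRingEnd ℂ z) • V)) = 1 := by
  have hVmul : star V * V = 1 := by
    rw [← star_eq_adjoint] at hV; exact hV
  -- norm of V is at most 1
  have hVnorm : ‖V‖ ≤ 1 := by
    refine V.opNorm_le_bound zero_le_one (fun x => ?_)
    have h2 : ‖V x‖ ^ 2 = ‖x‖ ^ 2 := by
      rw [← @inner_self_eq_norm_sq ℂ, ← @inner_self_eq_norm_sq ℂ,
        ← ContinuousLinearMap.adjoint_inner_left]
      have : adjoint V (V x) = x := by
        have := congrFun (congrArg DFunLike.coe hV) x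
        simpa using this
      rw [this]
    nlinarith [norm_nonneg (V x), norm_nonneg x]
  have hnorm : ‖(starRingEnd ℂ z) • V‖ < 1 := by
    calc ‖(starRingEnd ℂ z) • V‖ ≤ ‖(starRingEnd ℂ z)‖ * ‖V‖ := norm_smul_le _ _
    _ ≤ ‖z‖ * 1 := by
        have : ‖(starRingEnd ℂ z)‖ = ‖z‖ := RCLike.norm_conj z
        rw [this]; exact mul_le_mul_of_nonneg_left hVnorm (norm_nonneg z)
    _ < 1 := by rwa [mul_one]
  set a : H →L[ℂ] H := 1 - (starRingEnd ℂ z) • V with ha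
  set b : H →L[ℂ] H := z • (1 : H →L[ℂ] H) - V with hb
  have hUnit : IsUnit a := (Units.oneSub _ hnorm).isUnit
  refine ⟨hUnit, ?_⟩
  have hkey : star b * b = star a * a := by
    simp only [ha, hb, star_sub, star_smul, star_one, sub_mul, mul_sub,
      smul_mul_assoc, mul_smul_comm, one_mul, mul_one, hVmul,
      Complex.star_def, smul_smul, Complex.conj_conj, smul_sub]
    module
  obtain ⟨u, hu⟩ := hUnit
  have hinv : Ring.inverse a = (↑u⁻¹ : H →L[ℂ] H) := by
    rw [← hu, Ring.inverse_unit]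
  rw [← star_eq_adjoint, hinv, star_mul, mul_assoc, ← mul_assoc (star b),
    hkey]
  have h1 : a * (↑u⁻¹ : H →L[ℂ] H) = 1 := by rw [← hu]; exact u.mul_inv
  rw [show star (↑u⁻¹ : H →L[ℂ] H) * (star a * a * ↑u⁻¹) =
      (star ↑u⁻¹ * star a) * (a * ↑u⁻¹) by noncomm_ring,
    ← star_mul, h1]
  simp
end
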